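/- arXiv:2308.09974 — 2 statements merged into one kernel-verified Lean document; each statement's English description precedes it below -/
import Mathlib

section
/- Let $\kappa:\mathbb{R}\to\mathbb{R}$ be continuous with $\kappa(t)\geq 0$ for $t\geq 0$ and $\kappa(t)\leq 0$ for $t\leq 0$. Then there is no differentiable nowhere-vanishing function $y:\mathbb{R}\to\mathbb{R}$ with $y'(t)=1-\kappa(t)y(t)$ for all $t\in\mathbb{R}$. -/
/-- If `κ : ℝ → ℝ` is continuous with `κ ≥ 0` on `[0,∞)` and
`κ ≤ 0` on `(-∞,0]`, then there is no differentiable nowhere-vanishing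
`y : ℝ → ℝ` with `y' = 1 - κ y` everywhere. -/
theorem stmt9 (κ : ℝ → ℝ) (hκc : Continuous κ)
    (hκpos : ∀ t, 0 ≤ t → 0 ≤ κ t) (hκneg : ∀ t, t ≤ 0 → κ t ≤ 0) :
    ¬ ∃ y : ℝ → ℝ, (∀ t, HasDerivAt y (1 - κ t * y t) t) ∧ (∀ t, y t ≠ 0) := by
  rintro ⟨y, hy, hy0⟩
  have ycont : Continuous y := Differentiable.continuous (fun t => (hy t).differentiableAt)
  -- auxiliary g t = y t - t with g' t = -(κ t * y t)
  set g : ℝ → ℝ := fun t => y t - t with hgdef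
  have hg : ∀ t, HasDerivAt g (-(κ t * y t)) t := by
    intro t
    have : HasDerivAt (fun x => y x - x) (1 - κ t * y t - 1) t := (hy t).sub (hasDerivAt_id t)
    convert this using 1
    ring
  have gcont : Continuous g := by
    exact ycont.sub continuous_id
  have gderiv : ∀ t, deriv g t = -(κ t * y t) := fun t => (hg t).deriv
  rcases lt_or_gt_of_ne (hy0 0) with h0 | h0
  · -- y 0 < 0 : then y < 0 on [0,∞)
    have yneg : ∀ t, 0 ≤ t → y t < 0 := by
      intro t ht
      by_contra h
      push_neg at h
      have h' : 0 < y t := lt_of_le_of_ne h (Ne.symm (hy0 t))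
      obtain ⟨c, _, hc⟩ := intermediate_value_Icc ht ycont.continuousOn
        (show (0:ℝ) ∈ Set.Icc (y 0) (y t) from ⟨h0.le, h'.le⟩)
      exact hy0 c hc
    have mono : MonotoneOn g (Set.Ici (0:ℝ)) := by
      apply monotoneOn_of_deriv_nonneg (convex_Ici 0) gcont.continuousOn
        (fun x _ => (hg x).differentiableAt.differentiableWithinAt)
      intro x hx
      rw [interior_Ici] at hx
      rw [gderiv]
      have : κ x * y x ≤ 0 := mul_nonpos_of_nonneg_of_nonpos (hκpos x hx.le) (yneg x hx.le).le
      linarith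
    have ht : (0:ℝ) ≤ 1 - y 0 := by linarith
    have := mono (Set.self_mem_Ici) (Set.mem_Ici.mpr ht) ht
    simp only [hgdef] at this
    have := yneg (1 - y 0) ht
    linarith
  · -- y 0 > 0 : then y > 0 on (-∞,0]
    have ypos : ∀ t, t ≤ 0 → 0 < y t := by
      intro t ht
      by_contra h
      push_neg at h
      have h' : y t < 0 := lt_of_le_of_ne h (hy0 t)
      obtain ⟨c, _, hc⟩ := intermediate_value_Icc ht ycont.continuousOn
        (show (0:ℝ) ∈ Set.Icc (y t) (y 0) from ⟨h'.le, h0.le⟩)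
      exact hy0 c hc
    have mono : MonotoneOn g (Set.Iic (0:ℝ)) := by
      apply monotoneOn_of_deriv_nonneg (convex_Iic 0) gcont.continuousOn
        (fun x _ => (hg x).differentiableAt.differentiableWithinAt)
      intro x hx
      rw [interior_Iic] at hx
      rw [gderiv]
      have : κ x * y x ≤ 0 := mul_nonpos_of_nonpos_of_nonneg (hκneg x hx.le) (ypos x hx.le).le
      linarith
    have ht : -(y 0) - 1 ≤ (0:ℝ) := by linarith
    have := mono (Set.mem_Iic.mpr ht) (Set.self_mem_Iic) ht
    simp only [hgdef] at this
    have := ypos (-(y 0) - 1) ht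
    linarith
end

section
/- Let $\gamma:[s_0,b)\to\mathbb{R}$ be continuous, nondecreasing, and positive, let $A:[s_0,b)\to\mathbb{R}$ be continuous with $|A(s)|\le C$ for some constant $C$, and let $f:[s_0,b)\to(0,\infty)$ be differentiable with $f'(s)=-2f(s)\gamma(s)A(s)$ and $\lim_{s\to b^-}f(s)=0$. Then $\lim_{s\to b^-}\gamma(s)=+\infty$. -/
open Set Filter

/-- If `γ` is continuous, nondecreasing and positive on `[s₀,b)`,
`A` is continuous with `|A| ≤ C`, `f > 0` is differentiable with
`f' = -2 f γ A` and `f → 0` as `s → b⁻`, then `γ → +∞` as `s → b⁻`. -/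
theorem stmt11 (s₀ b C : ℝ) (hs : s₀ < b)
    (γ A f : ℝ → ℝ)
    (hγc : ContinuousOn γ (Set.Ico s₀ b)) (hγmono : MonotoneOn γ (Set.Ico s₀ b))
    (hγpos : ∀ s ∈ Set.Ico s₀ b, 0 < γ s)
    (hAc : ContinuousOn A (Set.Ico s₀ b)) (hAb : ∀ s ∈ Set.Ico s₀ b, |A s| ≤ C)
    (hfpos : ∀ s ∈ Set.Ico s₀ b, 0 < f s)
    (hf : ∀ s ∈ Set.Ico s₀ b,
      HasDerivWithinAt f (-2 * f s * γ s * A s) (Set.Ico s₀ b) s)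
    (hlim : Tendsto f (nhdsWithin b (Set.Iio b)) (nhds 0)) :
    Tendsto γ (nhdsWithin b (Set.Iio b)) atTop := by
  rw [tendsto_atTop]
  intro M
  -- it suffices to find one point where γ ≥ M
  suffices h : ∃ s₁ ∈ Set.Ico s₀ b, M ≤ γ s₁ by
    obtain ⟨s₁, hs₁, hMs₁⟩ := h
    have : Set.Ioo s₁ b ∈ nhdsWithin b (Set.Iio b) :=
      Ioo_mem_nhdsLT_of_mem ⟨hs₁.2, le_refl b⟩
    filter_upwards [this] with s hsm
    exact hMs₁.trans (hγmono hs₁ ⟨hs₁.1.trans hsm.1.le, hsm.2⟩ hsm.1.le)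
  by_contra hcon
  push_neg at hcon
  -- so γ < M everywhere on [s₀, b)
  have hs₀ : s₀ ∈ Set.Ico s₀ b := ⟨le_refl _, hs⟩
  have hM : 0 < M := (hγpos s₀ hs₀).trans (hcon s₀ hs₀)
  have hC : 0 ≤ C := (abs_nonneg _).trans (hAb s₀ hs₀)
  set K : ℝ := 2 * M * C with hK
  have hK0 : 0 ≤ K := by positivity
  -- g = f * exp(K (s - s₀)) is monotone on [s₀, b)
  set g : ℝ → ℝ := fun s => f s * Real.exp (K * (s - s₀)) with hg
  have hgmono : MonotoneOn g (Set.Ico s₀ b) := by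
    apply monotoneOn_of_hasDerivWithinAt_nonneg (f' := fun s =>
        (-2 * f s * γ s * A s + f s * K) * Real.exp (K * (s - s₀)))
        (convex_Ico s₀ b)
    · exact ContinuousOn.mul (fun s hs' => (hf s hs').continuousWithinAt)
        (Real.continuous_exp.comp (by continuity)).continuousOn
    · intro x hx
      rw [interior_Ico] at hx ⊢
      have hx' : x ∈ Set.Ico s₀ b := ⟨hx.1.le, hx.2⟩
      have hexp : HasDerivWithinAt (fun s => Real.exp (K * (s - s₀)))
          (Real.exp (K * (x - s₀)) * K) (Set.Ioo s₀ b) x := by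
        have : HasDerivAt (fun s => Real.exp (K * (s - s₀)))
            (Real.exp (K * (x - s₀)) * (K * 1)) x := by
          exact (Real.hasDerivAt_exp _).comp x
            (((hasDerivAt_id x).sub_const s₀).const_mul K)
        simpa using this.hasDerivWithinAt
      have := ((hf x hx').mono Set.Ioo_subset_Ico_self).mul hexp
      convert this using 1
      · rfl
      · rfl
      · rfl
      ring
    · intro x hx
      rw [interior_Ico] at hx
      have hx' : x ∈ Set.Ico s₀ b := ⟨hx.1.le, hx.2⟩
      apply mul_nonneg _ (Real.exp_pos _).le
      have h1 : -2 * f x * γ x * A x + f x * K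
          = f x * (K - 2 * (γ x * A x)) := by ring
      rw [h1]
      apply mul_nonneg (hfpos x hx').le
      have hγx := hγpos x hx'
      have : γ x * A x ≤ M * C := by
        calc γ x * A x ≤ γ x * |A x| := by
              exact mul_le_mul_of_nonneg_left (le_abs_self _) hγx.le
          _ ≤ M * C := mul_le_mul (hcon x hx').le (hAb x hx') (abs_nonneg _) hM.le
      nlinarith
  -- so f s ≥ f s₀ * exp(-K(b - s₀)) =: ε on [s₀, b)
  set ε : ℝ := f s₀ * Real.exp (-(K * (b - s₀))) with hε
  have hεpos : 0 < ε := mul_pos (hfpos s₀ hs₀) (Real.exp_pos _)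
  have hlb : ∀ s ∈ Set.Ico s₀ b, ε ≤ f s := by
    intro s hsm
    have h1 : g s₀ ≤ g s := hgmono hs₀ hsm hsm.1
    have h2 : g s₀ = f s₀ := by simp [hg]
    have h3 : Real.exp (K * (s - s₀)) ≤ Real.exp (K * (b - s₀)) :=
      Real.exp_le_exp.2 (mul_le_mul_of_nonneg_left (by linarith [hsm.2]) hK0)
    have h4 : f s₀ ≤ f s * Real.exp (K * (b - s₀)) := by
      calc f s₀ = g s₀ := h2.symm
        _ ≤ g s := h1
        _ ≤ f s * Real.exp (K * (b - s₀)) :=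
            mul_le_mul_of_nonneg_left h3 (hfpos s hsm).le
    rw [hε, Real.exp_neg]
    rw [mul_inv_le_iff₀ (Real.exp_pos _)]
    linarith
  -- but f → 0, contradiction
  have hev : ∀ᶠ s in nhdsWithin b (Set.Iio b), f s < ε :=
    hlim.eventually (eventually_lt_nhds hεpos)
  have hev2 : Set.Ioo s₀ b ∈ nhdsWithin b (Set.Iio b) :=
    Ioo_mem_nhdsLT_of_mem ⟨hs, le_refl b⟩
  obtain ⟨s, hfs, hsm⟩ := (hev.and (eventually_of_mem hev2 (fun s hs' => hs'))).exists
  exact absurd (hlb s ⟨hsm.1.le, hsm.2⟩) (not_le.2 hfs)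
end
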